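/- arXiv:2509.06522 — 6 statements merged into one kernel-verified Lean document; each statement's English description precedes it below -/
import Mathlib

section
/- Let n, t₁, t₂ be rational integers with n not a perfect square, and suppose t₁t₂ + n is a perfect square in ℤ. Then for any prime q dividing t₁t₂, q^{f_q} divides t₁t₂, where f_q is the residue (inertia) degree of q in the quadratic extension ℚ(√n)/ℚ. In particular, if q is inert in ℚ(√n), then q² divides t₁t₂. -/
open NumberField Module

open Polynomial in
lemma norm_r_sub_s (n r : ℤ) (hn : ¬ IsSquare n)
    (K : Type*) [Field K] [NumberField K] (hK : finrank ℚ K = 2)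
    (s : K) (hs : s ^ 2 = (n : K)) :
    Algebra.norm ℚ ((r : K) - s) = ((r ^ 2 - n : ℤ) : ℚ) := by
  have hsirr : ∀ c : ℚ, algebraMap ℚ K c ≠ s := by
    intro c hc
    have hc2 : c ^ 2 = (n : ℚ) := by
      have : algebraMap ℚ K (c ^ 2) = algebraMap ℚ K (n : ℚ) := by
        rw [map_pow, hc, hs]; simp
      exact (algebraMap ℚ K).injective this
    have hint : IsIntegral ℤ c := by
      refine ⟨X ^ 2 - C n, monic_X_pow_sub_C n (by norm_num), ?_⟩
      simp only [eval₂_sub, eval₂_pow, eval₂_X, eval₂_C, hc2]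
      simp
    obtain ⟨m, hm⟩ := IsIntegrallyClosed.isIntegral_iff.mp hint
    apply hn
    refine ⟨m, ?_⟩
    have : ((m * m : ℤ) : ℚ) = (n : ℚ) := by
      have hm' : (m : ℚ) = c := hm
      push_cast
      rw [hm', ← hc2]; ring
    exact_mod_cast this.symm
  have li : LinearIndependent ℚ ![(1 : K), s] := by
    rw [LinearIndependent.pair_iff]
    intro a b hab
    by_cases hb : b = 0
    · subst hb
      simp only [zero_smul, add_zero, smul_eq_zero, one_ne_zero, or_false] at hab
      exact ⟨hab, rfl⟩
    · exfalso
      apply hsirr (-a / b)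
      have hb' : algebraMap ℚ K b ≠ 0 := by
        simpa using hb
      rw [map_div₀, map_neg, div_eq_iff hb', neg_eq_iff_eq_neg]
      rw [Algebra.smul_def, Algebra.smul_def] at hab
      linear_combination hab
  have cardeq : Fintype.card (Fin 2) = finrank ℚ K := by simp [hK]
  let b : Basis (Fin 2) ℚ K := basisOfLinearIndependentOfCardEqFinrank li cardeq
  have hb0 : b 0 = 1 := by simp [b, coe_basisOfLinearIndependentOfCardEqFinrank]
  have hb1 : b 1 = s := by simp [b, coe_basisOfLinearIndependentOfCardEqFinrank]
  rw [Algebra.norm_eq_matrix_det b]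
  have smul_int : ∀ (c : ℤ) (x : K), ((c : ℤ) : ℚ) • x = ((c : ℤ) : K) * x := by
    intro c x
    rw [Algebra.smul_def, map_intCast]
  have repr_comb : ∀ (c d : ℚ) (i : Fin 2), b.repr (c • b 0 + d • b 1) i = c * (if (0:Fin 2) = i then 1 else 0) + d * (if (1:Fin 2) = i then 1 else 0) := by
    intro c d i
    simp [map_add, map_smul, Basis.repr_self, Finsupp.single_apply]
  have hmul0 : ((r : K) - s) * b 0 = ((r : ℤ) : ℚ) • b 0 + ((-1 : ℤ) : ℚ) • b 1 := by
    rw [hb0, hb1, smul_int, smul_int]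
    push_cast
    ring
  have hmul1 : ((r : K) - s) * b 1 = ((-n : ℤ) : ℚ) • b 0 + ((r : ℤ) : ℚ) • b 1 := by
    rw [hb0, hb1, smul_int, smul_int]
    push_cast
    linear_combination -hs
  have hM : ∀ i j, Algebra.leftMulMatrix b ((r : K) - s) i j = b.repr (((r : K) - s) * b j) i := by
    intro i j
    rw [Algebra.leftMulMatrix_eq_repr_mul]
  rw [Matrix.det_fin_two]
  rw [hM, hM, hM, hM, hmul0, hmul1, repr_comb, repr_comb, repr_comb, repr_comb]
  norm_num
  ring

open NumberField Module

set_option synthInstance.maxHeartbeats 1000000 in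
/-- If `n` is not a perfect square and `t₁t₂ + n` is a perfect square in `ℤ`,
then for any prime `q` dividing `t₁t₂` and any prime ideal `Q` of the ring of integers of
`ℚ(√n)` lying above `q`, we have `q ^ f_q ∣ t₁t₂` where `f_q` is the residue (inertia) degree
of `q`.  In particular, if `q` is inert in `ℚ(√n)` then `q² ∣ t₁t₂`. -/
theorem prime_power_divides_of_diophantine_pair
    (n t₁ t₂ : ℤ) (hn : ¬ IsSquare n) (hsq : ∃ r : ℤ, t₁ * t₂ + n = r ^ 2)
    (K : Type*) [Field K] [NumberField K] (hK : finrank ℚ K = 2)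
    (s : K) (hs : s ^ 2 = (n : K))
    (q : ℕ) (hq : q.Prime) (hdvd : (q : ℤ) ∣ t₁ * t₂) :
    (∀ Q : Ideal (𝓞 K), Q.IsPrime → Q ≠ ⊥ →
        Q.comap (algebraMap ℤ (𝓞 K)) = Ideal.span {(q : ℤ)} →
        (q : ℤ) ^ Ideal.inertiaDeg' (Ideal.span {(q : ℤ)}) Q ∣ t₁ * t₂) ∧
      (Prime (Ideal.span {(q : 𝓞 K)}) → (q : ℤ) ^ 2 ∣ t₁ * t₂) := by
  obtain ⟨r, hr⟩ := hsq
  have ht : t₁ * t₂ = r ^ 2 - n := by linarith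
  -- s is integral over ℤ
  have hsint : IsIntegral ℤ s := by
    refine ⟨Polynomial.X ^ 2 - Polynomial.C n, Polynomial.monic_X_pow_sub_C n (by norm_num), ?_⟩
    simp only [Polynomial.eval₂_sub, Polynomial.eval₂_pow, Polynomial.eval₂_X,
      Polynomial.eval₂_C, hs]
    simp
  set s' : 𝓞 K := ⟨s, hsint⟩ with hs'def
  have hs'2 : s' ^ 2 = (n : 𝓞 K) := by
    ext
    push_cast [hs'def]
    exact hs
  set x' : 𝓞 K := (r : 𝓞 K) - s' with hx'def
  set y' : 𝓞 K := (r : 𝓞 K) + s' with hy'def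
  have hxy : x' * y' = ((t₁ * t₂ : ℤ) : 𝓞 K) := by
    rw [hx'def, hy'def, ht]
    push_cast
    linear_combination (-(1:𝓞 K)) * hs'2
  have hnegs : (-s) ^ 2 = (n : K) := by rw [neg_pow]; simp [hs]
  have Nx : Algebra.norm ℤ x' = t₁ * t₂ := by
    have h1 : ((Algebra.norm ℤ x' : ℤ) : ℚ) = ((r ^ 2 - n : ℤ) : ℚ) := by
      rw [Algebra.coe_norm_int]
      have hcoe : (x' : K) = (r : K) - s := by push_cast [hx'def, hs'def]; rfl
      rw [hcoe]
      exact norm_r_sub_s n r hn K hK s hs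
    have := Int.cast_injective (α := ℚ) h1
    rw [this, ht]
  have Ny : Algebra.norm ℤ y' = t₁ * t₂ := by
    have h1 : ((Algebra.norm ℤ y' : ℤ) : ℚ) = ((r ^ 2 - n : ℤ) : ℚ) := by
      rw [Algebra.coe_norm_int]
      have hcoe : (y' : K) = (r : K) - (-s) := by push_cast [hy'def, hs'def]; ring_nf; rfl
      rw [hcoe]
      exact norm_r_sub_s n r hn K hK (-s) hnegs
    have := Int.cast_injective (α := ℚ) h1
    rw [this, ht]
  constructor
  · intro Q hQprime hQbot hQcomap
    -- q^f = absNorm Q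
    haveI : Q.IsPrime := hQprime
    -- membership
    have hqmem : algebraMap ℤ (𝓞 K) (q : ℤ) ∈ Q := by
      have h1 : (q : ℤ) ∈ Q.comap (algebraMap ℤ (𝓞 K)) := by
        rw [hQcomap]; exact Ideal.mem_span_singleton_self _
      exact h1
    have htmem : x' * y' ∈ Q := by
      rw [hxy]
      obtain ⟨m, hm⟩ := hdvd
      rw [hm]
      have : ((( (q:ℤ) * m : ℤ)) : 𝓞 K) = algebraMap ℤ (𝓞 K) (q : ℤ) * algebraMap ℤ (𝓞 K) m := by
        push_cast; simp [algebraMap_int_eq]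
      rw [this]
      exact Ideal.mul_mem_right _ _ hqmem
    have hmem : x' ∈ Q ∨ y' ∈ Q := hQprime.mem_or_mem htmem
    have hdvdnorm : (Ideal.absNorm Q : ℤ) ∣ t₁ * t₂ := by
      rcases hmem with h | h
      · have := Ideal.absNorm_dvd_norm_of_mem h
        rwa [Nx] at this
      · have := Ideal.absNorm_dvd_norm_of_mem h
        rwa [Ny] at this
    -- absNorm Q = q ^ f
    have habs_ne : Ideal.absNorm Q ≠ 0 := by
      rw [Ne, Ideal.absNorm_eq_zero_iff]; exact hQbot
    haveI hfin : Finite (𝓞 K ⧸ Q) := (Ideal.absNorm_ne_zero_iff Q).mp habs_ne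
    haveI : Fintype (𝓞 K ⧸ Q) := Fintype.ofFinite _
    haveI hmax : (Ideal.span {(q : ℤ)}).IsMaximal :=
      PrincipalIdealRing.isMaximal_of_irreducible (Int.prime_iff_natAbs_prime.mpr (by simpa using hq)).irreducible
    haveI : Fintype (ℤ ⧸ Ideal.span {(q : ℤ)}) :=
      haveI : NeZero q := ⟨hq.ne_zero⟩
      Fintype.ofEquiv (ZMod q) (Int.quotientSpanNatEquivZMod q).symm.toEquiv
    have cardbase : Fintype.card (ℤ ⧸ Ideal.span {((q:ℕ) : ℤ)}) = q := by
      haveI : NeZero q := ⟨hq.ne_zero⟩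
      rw [Fintype.card_congr (Int.quotientSpanNatEquivZMod q).toEquiv, ZMod.card]
    haveI hlies : Q.LiesOver (Ideal.span {(q : ℤ)}) := ⟨hQcomap.symm⟩
    rw [Ideal.inertiaDeg'_algebraMap]
    have habs : Ideal.absNorm Q = q ^ (finrank (ℤ ⧸ Ideal.span {(q : ℤ)}) (𝓞 K ⧸ Q)) := by
      letI F : Field (ℤ ⧸ Ideal.span {(q : ℤ)}) := Ideal.Quotient.field _
      rw [Ideal.absNorm_apply, Submodule.cardQuot_apply, Nat.card_eq_fintype_card]
      have h := card_eq_pow_finrank (K := ℤ ⧸ Ideal.span {(q : ℤ)}) (V := 𝓞 K ⧸ Q)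
      rw [cardbase] at h
      exact h
    have hfinal : (((q : ℕ) ^ (finrank (ℤ ⧸ Ideal.span {(q : ℤ)}) (𝓞 K ⧸ Q)) : ℕ) : ℤ) ∣ t₁ * t₂ := by
      rw [← habs]; exact_mod_cast hdvdnorm
    exact_mod_cast hfinal
  · intro hpr
    have hq0 : (q : 𝓞 K) ≠ 0 := by
      exact_mod_cast hq.ne_zero
    have hqprime : Prime ((q : ℕ) : 𝓞 K) := (Ideal.span_singleton_prime hq0).mp (Ideal.isPrime_of_prime hpr)
    have hdvd' : ((q : ℕ) : 𝓞 K) ∣ x' * y' := by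
      rw [hxy]
      have h2 : (((q : ℤ) : 𝓞 K)) ∣ ((t₁ * t₂ : ℤ) : 𝓞 K) := Int.cast_dvd_cast _ _ hdvd
      exact_mod_cast h2
    have hNq : Algebra.norm ℤ ((q : ℕ) : 𝓞 K) = (q : ℤ) ^ 2 := by
      have h1 : ((Algebra.norm ℤ ((q : ℕ) : 𝓞 K) : ℤ) : ℚ) = (((q:ℤ) ^ 2 : ℤ) : ℚ) := by
        rw [Algebra.coe_norm_int]
        have : (((q : ℕ) : 𝓞 K) : K) = algebraMap ℚ K ((q : ℕ) : ℚ) := by push_cast; simp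
        rw [this, Algebra.norm_algebraMap, hK]
        push_cast
        ring
      exact Int.cast_injective (α := ℚ) h1
    rcases hqprime.dvd_mul.mp hdvd' with h | h
    · have := map_dvd (Algebra.norm ℤ) h
      rw [hNq, Nx] at this
      exact this
    · have := map_dvd (Algebra.norm ℤ) h
      rw [hNq, Ny] at this
      exact this
end

section
/- Let n be a nonzero integer that is not a perfect square and let {t₁, …, t_m} be a Diophantine m-tuple with the property D(n). Then there exists a positive integer κ dividing each tᵢ such that for every i the quotient tᵢ/κ is the norm of a nonzero integral ideal of ℚ(√n); that is, every Diophantine m-tuple with the property D(n) is a norm tuple or a constant times a norm tuple. -/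
open NumberField Module

section DiophAux

open Polynomial Ideal

set_option synthInstance.maxHeartbeats 1000000
set_option maxHeartbeats 1000000

lemma aux_norm (n : ℤ) (hn : n ≠ 0) (hnsq : ¬ IsSquare n)
    (K : Type*) [Field K] [NumberField K] (hK : finrank ℚ K = 2)
    (s : K) (hs : s ^ 2 = (n : K)) (r : ℤ) :
    Algebra.norm ℚ ((r : K) + s) = ((r ^ 2 - n : ℤ) : ℚ) := by
  have hsnotrat : ∀ q : ℚ, algebraMap ℚ K q ≠ s := by
    intro q hq
    have hq2 : q ^ 2 = (n : ℚ) := by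
      apply (algebraMap ℚ K).injective
      rw [map_pow, hq, hs]
      simp
    have hint : IsIntegral ℤ q := by
      refine ⟨X ^ 2 - C n, monic_X_pow_sub_C n (by norm_num), ?_⟩
      rw [eval₂_sub, eval₂_pow, eval₂_X, eval₂_C, hq2]
      simp
    obtain ⟨z, hz⟩ := IsIntegrallyClosed.isIntegral_iff.mp hint
    apply hnsq
    refine ⟨z, ?_⟩
    have : ((z : ℚ)) ^ 2 = (n : ℚ) := by
      rw [show ((z : ℚ)) = q by exact_mod_cast hz]; exact hq2
    have : (z ^ 2 : ℤ) = n := by exact_mod_cast this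
    rw [← this]; ring
  have hs0 : s ≠ 0 := by
    intro h
    apply hn
    have : (n : K) = 0 := by rw [← hs, h]; ring
    exact_mod_cast this
  have li : LinearIndependent ℚ ![1, s] := by
    rw [linearIndependent_fin2]
    refine ⟨by simpa using hs0, ?_⟩
    intro a ha
    simp only [Matrix.cons_val_one, Matrix.head_cons, Matrix.cons_val_zero] at ha
    have ha0 : a ≠ 0 := by rintro rfl; simp at ha
    apply hsnotrat a⁻¹
    rw [Algebra.algebraMap_eq_smul_one, ← ha, smul_smul, inv_mul_cancel₀ ha0, one_smul]
  have hcard : Fintype.card (Fin 2) = finrank ℚ K := by simp [hK]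
  set b := basisOfLinearIndependentOfCardEqFinrank li hcard with hbdef
  have hb : ⇑b = ![1, s] := coe_basisOfLinearIndependentOfCardEqFinrank li hcard
  have hb0 : b 0 = 1 := by rw [hb]; rfl
  have hb1 : b 1 = s := by rw [hb]; rfl
  have h00 : ((r : K) + s) * b 0 = (r : ℚ) • b 0 + (1 : ℚ) • b 1 := by
    rw [hb0, hb1]
    simp [Algebra.smul_def]
  have h01 : ((r : K) + s) * b 1 = ((n : ℚ)) • b 0 + (r : ℚ) • b 1 := by
    rw [hb0, hb1]
    simp only [Algebra.smul_def, mul_one, map_intCast]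
    linear_combination hs
  rw [Algebra.norm_eq_matrix_det b, Matrix.det_fin_two]
  have e00 : Algebra.leftMulMatrix b ((r : K) + s) 0 0 = (r : ℚ) := by
    rw [Algebra.leftMulMatrix_eq_repr_mul, h00, map_add, map_smul, map_smul, b.repr_self,
      b.repr_self]
    simp [Finsupp.single_apply]
  have e10 : Algebra.leftMulMatrix b ((r : K) + s) 1 0 = (1 : ℚ) := by
    rw [Algebra.leftMulMatrix_eq_repr_mul, h00, map_add, map_smul, map_smul, b.repr_self,
      b.repr_self]
    simp [Finsupp.single_apply]
  have e01 : Algebra.leftMulMatrix b ((r : K) + s) 0 1 = (n : ℚ) := by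
    rw [Algebra.leftMulMatrix_eq_repr_mul, h01, map_add, map_smul, map_smul, b.repr_self,
      b.repr_self]
    simp [Finsupp.single_apply]
  have e11 : Algebra.leftMulMatrix b ((r : K) + s) 1 1 = (r : ℚ) := by
    rw [Algebra.leftMulMatrix_eq_repr_mul, h01, map_add, map_smul, map_smul, b.repr_self,
      b.repr_self]
    simp [Finsupp.single_apply]
  rw [e00, e01, e10, e11]
  push_cast
  ring


def Nrm (K : Type*) [Field K] [NumberField K] (a : ℕ) : Prop :=
  ∃ 𝔞 : Ideal (𝓞 K), 𝔞 ≠ ⊥ ∧ Ideal.absNorm 𝔞 = a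

lemma nrm_one (K : Type*) [Field K] [NumberField K] : Nrm K 1 :=
  ⟨⊤, top_ne_bot, Ideal.absNorm_top⟩

lemma nrm_mul {K : Type*} [Field K] [NumberField K] {a b : ℕ}
    (ha : Nrm K a) (hb : Nrm K b) : Nrm K (a * b) := by
  obtain ⟨I, hI, hIa⟩ := ha
  obtain ⟨J, hJ, hJb⟩ := hb
  refine ⟨I * J, ?_, by rw [_root_.map_mul, hIa, hJb]⟩
  rw [ne_eq, ← Ideal.zero_eq_bot] at *
  exact mul_ne_zero hI hJ

lemma absNorm_span_natCast {K : Type*} [Field K] [NumberField K]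
    (hK : finrank ℚ K = 2) (a : ℕ) :
    Ideal.absNorm (Ideal.span {(a : 𝓞 K)}) = a ^ 2 := by
  rw [Ideal.absNorm_span_singleton]
  have h1 : (Algebra.norm ℤ ((a : 𝓞 K)) : ℚ) = (a : ℚ) ^ 2 := by
    rw [Algebra.coe_norm_int]
    have h2 : (((a : 𝓞 K) : K)) = algebraMap ℚ K ((a : ℚ)) := by
      simp
    rw [h2, Algebra.norm_algebraMap, hK]
  have h3 : Algebra.norm ℤ ((a : 𝓞 K)) = (a : ℤ) ^ 2 := by exact_mod_cast h1
  rw [h3]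
  simp [Int.natAbs_pow]

lemma nrm_sq {K : Type*} [Field K] [NumberField K] (hK : finrank ℚ K = 2) {a : ℕ}
    (ha : a ≠ 0) : Nrm K (a ^ 2) := by
  refine ⟨Ideal.span {(a : 𝓞 K)}, ?_, absNorm_span_natCast hK a⟩
  simp [Ideal.span_singleton_eq_bot, ha]

set_option synthInstance.maxHeartbeats 1000000 in
set_option maxHeartbeats 1000000 in
lemma even_factorization_absNorm_prime {K : Type*} [Field K] [NumberField K]
    (hK : finrank ℚ K = 2) {P : Ideal (𝓞 K)} (hP : P.IsPrime) (hP0 : P ≠ ⊥) {p : ℕ}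
    (hp : p.Prime) (hnp : ¬ Nrm K p) : Even ((Ideal.absNorm P).factorization p) := by
  letI := @Fintype.ofFinite _ (Ideal.finiteQuotientOfFreeOfNeBot P hP0)
  haveI : P.IsMaximal := hP.isMaximal hP0
  letI : Field (𝓞 K ⧸ P) := Ideal.Quotient.field P
  set q := ringChar (𝓞 K ⧸ P) with hqdef
  haveI : CharP (𝓞 K ⧸ P) q := ringChar.charP _
  obtain ⟨f, hq, hcard⟩ := FiniteField.card (𝓞 K ⧸ P) q
  have hNP : Ideal.absNorm P = q ^ (f : ℕ) := by
    rw [Ideal.absNorm_apply, Submodule.cardQuot_apply, Nat.card_eq_fintype_card, hcard]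
  have hqP : (q : 𝓞 K) ∈ P := by
    rw [← Ideal.Quotient.eq_zero_iff_mem, map_natCast]
    exact CharP.cast_eq_zero _ q
  have hdvd : q ^ (f : ℕ) ∣ q ^ 2 := by
    rw [← hNP, ← absNorm_span_natCast hK q]
    exact map_dvd _ (Ideal.dvd_iff_le.mpr ((Ideal.span_singleton_le_iff_mem _).mpr hqP))
  have hf2 : (f : ℕ) ≤ 2 := (Nat.pow_dvd_pow_iff_le_right hq.one_lt).mp hdvd
  rw [hNP, Nat.Prime.factorization_pow hq, Finsupp.single_apply]
  rcases eq_or_ne q p with rfl | hqp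
  · have hf1 : (f : ℕ) ≠ 1 := by
      intro h1
      exact hnp ⟨P, hP0, by rw [hNP, h1, pow_one]⟩
    have hf1' : 1 ≤ (f : ℕ) := f.one_le
    have : (f : ℕ) = 2 := by omega
    simp [this]
  · simp [hqp]

lemma even_of_nrm {K : Type*} [Field K] [NumberField K] (hK : finrank ℚ K = 2) {a : ℕ}
    (ha : Nrm K a) {p : ℕ} (hp : p.Prime) (hnp : ¬ Nrm K p) :
    Even (a.factorization p) := by
  obtain ⟨I, hI0, rfl⟩ := ha
  revert hI0
  induction I using UniqueFactorizationMonoid.induction_on_prime with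
  | h₁ => intro h; exact absurd Ideal.zero_eq_bot h
  | h₂ x hx => intro _; rw [Ideal.isUnit_iff.mp hx, Ideal.absNorm_top]; simp
  | h₃ J Q hJ hQ ih =>
    intro _
    have hJ0 : J ≠ ⊥ := by rwa [← Ideal.zero_eq_bot]
    have hQ0 : Q ≠ ⊥ := by rw [← Ideal.zero_eq_bot]; exact hQ.ne_zero
    rw [_root_.map_mul, Nat.factorization_mul (by simpa [Ideal.absNorm_eq_zero_iff] using hQ0)
      (by simpa [Ideal.absNorm_eq_zero_iff] using hJ0), Finsupp.add_apply]
    exact (even_factorization_absNorm_prime hK (Ideal.isPrime_of_prime hQ) hQ0 hp hnp).add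
      (ih hJ0)

lemma nrm_of_even {K : Type*} [Field K] [NumberField K] (hK : finrank ℚ K = 2) :
    ∀ a : ℕ, a ≠ 0 → (∀ p : ℕ, p.Prime → ¬ Nrm K p → Even (a.factorization p)) → Nrm K a := by
  intro a
  induction a using Nat.strong_induction_on with
  | _ a ih =>
    intro ha hev
    rcases eq_or_ne a 1 with rfl | ha1
    · exact nrm_one K
    obtain ⟨p, hp, hpa⟩ := Nat.exists_prime_and_dvd ha1
    have he1 : 1 ≤ a.factorization p := hp.factorization_pos_of_dvd ha hpa
    have hpe : p ^ a.factorization p * (a / p ^ a.factorization p) = a :=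
      Nat.ordProj_mul_ordCompl_eq_self a p
    have hb0 : a / p ^ a.factorization p ≠ 0 := (Nat.ordCompl_pos p ha).ne'
    have hblt : a / p ^ a.factorization p < a := by
      have h2 : 1 < p ^ a.factorization p :=
        Nat.one_lt_pow (by omega) hp.one_lt
      calc a / p ^ a.factorization p
          < p ^ a.factorization p * (a / p ^ a.factorization p) := by
            exact lt_mul_of_one_lt_left (Nat.pos_of_ne_zero hb0) h2
        _ = a := hpe
    have hbnrm : Nrm K (a / p ^ a.factorization p) := by
      refine ih _ hblt hb0 ?_
      intro q hq hnq
      rw [Nat.factorization_ordCompl a p, Finsupp.erase_apply]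
      rcases eq_or_ne q p with rfl | hqp
      · simp
      · simp only [if_neg hqp]
        exact hev q hq hnq
    have hpnrm : Nrm K (p ^ a.factorization p) := by
      by_cases hNp : Nrm K p
      · obtain ⟨C, hC0, hCp⟩ := hNp
        refine ⟨C ^ a.factorization p, ?_, by rw [map_pow, hCp]⟩
        rw [ne_eq, ← Ideal.zero_eq_bot] at *
        exact pow_ne_zero _ hC0
      · obtain ⟨k, hk⟩ := hev p hp hNp
        refine ⟨(Ideal.span {(p : 𝓞 K)}) ^ k, ?_, ?_⟩
        · rw [ne_eq, ← Ideal.zero_eq_bot]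
          apply pow_ne_zero
          rw [Ideal.zero_eq_bot]
          simp [Ideal.span_singleton_eq_bot, hp.ne_zero]
        · rw [map_pow, absNorm_span_natCast hK, ← pow_mul, hk]
          ring_nf
    rw [← hpe]
    exact nrm_mul hpnrm hbnrm

lemma nrm_def {K : Type*} [Field K] [NumberField K] (a : ℕ) :
    Nrm K a ↔ ∃ 𝔞 : Ideal (𝓞 K), 𝔞 ≠ ⊥ ∧ Ideal.absNorm 𝔞 = a := Iff.rfl



/-- Every Diophantine `m`-tuple with the property `D(n)` is a norm tuple or
a constant times a norm tuple: there is a positive integer `κ` dividing each `tᵢ` such that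
each `tᵢ/κ` is the norm of a nonzero integral ideal of `ℚ(√n)`. -/
theorem diophantine_tuple_is_const_times_norm_tuple
    (n : ℤ) (hn : n ≠ 0) (hnsq : ¬ IsSquare n)
    (K : Type*) [Field K] [NumberField K] (hK : finrank ℚ K = 2)
    (s : K) (hs : s ^ 2 = (n : K))
    (m : ℕ) (t : Fin m → ℕ) (hinj : Function.Injective t) (hpos : ∀ i, 0 < t i)
    (hD : ∀ i j, i ≠ j → ∃ r : ℤ, (t i : ℤ) * t j + n = r ^ 2) :
    ∃ κ : ℕ, 0 < κ ∧ ∀ i, ∃ 𝔞 : Ideal (𝓞 K), 𝔞 ≠ ⊥ ∧ t i = κ * Ideal.absNorm 𝔞 := by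
  classical
  have hsint : IsIntegral ℤ s := by
    refine ⟨X ^ 2 - C n, monic_X_pow_sub_C n (by norm_num), ?_⟩
    rw [eval₂_sub, eval₂_pow, eval₂_X, eval₂_C, hs]
    simp
  have hNij : ∀ i j, i ≠ j → Nrm K (t i * t j) := by
    intro i j hij
    obtain ⟨r, hr⟩ := hD i j hij
    have htij : ((t i * t j : ℕ) : ℤ) = r ^ 2 - n := by push_cast at hr ⊢; linarith
    set α : 𝓞 K := (r : 𝓞 K) + ⟨s, hsint⟩ with hα
    have hαK : (α : K) = (r : K) + s := by
      rw [hα]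
      push_cast
      rfl
    have hnormQ : (Algebra.norm ℤ α : ℚ) = ((t i * t j : ℕ) : ℚ) := by
      rw [Algebra.coe_norm_int, hαK, aux_norm n hn hnsq K hK s hs r, ← htij]
      norm_cast
    have hnormZ : Algebra.norm ℤ α = ((t i * t j : ℕ) : ℤ) := by exact_mod_cast hnormQ
    rw [nrm_def]
    refine ⟨Ideal.span {α}, ?_, ?_⟩
    · rw [ne_eq, Ideal.span_singleton_eq_bot]
      intro hα0
      rw [hα0, Algebra.norm_zero] at hnormZ
      have : t i * t j ≠ 0 := Nat.mul_ne_zero (hpos i).ne' (hpos j).ne'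
      exact this (by exact_mod_cast hnormZ.symm)
    · rw [Ideal.absNorm_span_singleton, hnormZ, Int.natAbs_natCast]
  rcases Nat.eq_zero_or_pos m with rfl | hm
  · exact ⟨1, one_pos, fun i => i.elim0⟩
  set i₀ : Fin m := ⟨0, hm⟩ with hi₀
  have hpar : ∀ p : ℕ, p.Prime → ¬ Nrm K p → ∀ i,
      Even ((t i₀).factorization p + (t i).factorization p) := by
    intro p hp hnp i
    rcases eq_or_ne i i₀ with rfl | hii
    · exact Even.add_self _
    · have h := even_of_nrm hK (hNij i₀ i (Ne.symm hii)) hp hnp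
      rwa [Nat.factorization_mul (hpos i₀).ne' (hpos i).ne', Finsupp.add_apply] at h
  set S : Finset ℕ :=
    (t i₀).primeFactors.filter (fun p => ¬ Nrm K p ∧ Odd ((t i₀).factorization p)) with hS
  have hSprime : ∀ p ∈ S, p.Prime := fun p hp =>
    Nat.prime_of_mem_primeFactors (Finset.mem_filter.mp hp).1
  set κ := ∏ p ∈ S, p with hκ
  have hκpos : 0 < κ := Finset.prod_pos (fun p hp => (hSprime p hp).pos)
  have hκfact : ∀ q, κ.factorization q = if q ∈ S then 1 else 0 := by
    intro q
    rw [hκ, Nat.factorization_prod (fun p hp => (hSprime p hp).pos.ne')]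
    rw [Finsupp.finset_sum_apply]
    rw [Finset.sum_congr rfl (fun p hp => by
      rw [(hSprime p hp).factorization, Finsupp.single_apply])]
    exact Finset.sum_ite_eq' S q (fun _ => 1)
  have hodd : ∀ p ∈ S, ∀ i, Odd ((t i).factorization p) := by
    intro p hp i
    obtain ⟨hmem, hnp, ho⟩ := Finset.mem_filter.mp hp
    have hpprime := Nat.prime_of_mem_primeFactors hmem
    have := hpar p hpprime hnp i
    rcases this with ⟨k, hk⟩
    rcases ho with ⟨l, hl⟩
    exact ⟨k - l - 1, by omega⟩
  have hκdvd : ∀ i, κ ∣ t i := by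
    intro i
    refine Finset.prod_primes_dvd _ (fun p hp => (hSprime p hp).prime) (fun p hp => ?_)
    rw [(hSprime p hp).dvd_iff_one_le_factorization (hpos i).ne']
    exact (hodd p hp i).pos
  refine ⟨κ, hκpos, fun i => ?_⟩
  have hq : Nrm K (t i / κ) := by
    apply nrm_of_even hK
    · exact (Nat.div_pos (Nat.le_of_dvd (hpos i) (hκdvd i)) hκpos).ne'
    · intro q hqp hnq
      rw [Nat.factorization_div (hκdvd i), Finsupp.tsub_apply, hκfact q]
      by_cases hqS : q ∈ S
      · rw [if_pos hqS]
        obtain ⟨l, hl⟩ := hodd q hqS i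
        exact ⟨l, by omega⟩
      · rw [if_neg hqS]
        have heven0 : Even ((t i₀).factorization q) := by
          by_cases hmem : q ∈ (t i₀).primeFactors
          · have : ¬ Odd ((t i₀).factorization q) := by
              intro ho
              exact hqS (Finset.mem_filter.mpr ⟨hmem, hnq, ho⟩)
            exact Nat.not_odd_iff_even.mp this
          · rw [← Nat.support_factorization, Finsupp.notMem_support_iff] at hmem
            simp [hmem]
        have := hpar q hqp hnq i
        rcases heven0 with ⟨k, hk⟩
        rcases this with ⟨l, hl⟩
        exact ⟨l - k, by omega⟩
  rw [nrm_def] at hq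
  obtain ⟨𝔞, h𝔞0, h𝔞⟩ := hq
  exact ⟨𝔞, h𝔞0, by rw [h𝔞, Nat.mul_div_cancel' (hκdvd i)]⟩

end DiophAux
end

section
/- Let n be a nonzero integer that is not a perfect square. Every Diophantine m-tuple with the property D(n) that contains the element 1 is a norm tuple: each of its elements is the norm of a nonzero integral ideal of ℚ(√n). -/
open NumberField Module

lemma quad_norm_formula (K : Type*) [Field K] [NumberField K] (hK : finrank ℚ K = 2)
    (s : K) (hsirr : ∀ q : ℚ, (q : K) ≠ s) (nq a : ℚ) (hs : s ^ 2 = (nq : K)) :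
    Algebra.norm ℚ ((a : K) + s) = a ^ 2 - nq := by
  have li : LinearIndependent ℚ ![(1 : K), s] := by
    rw [LinearIndependent.pair_iff]
    intro c d hcd
    by_cases hd : d = 0
    · subst hd
      have hc : (c : K) = 0 := by simpa [Rat.smul_def] using hcd
      exact ⟨by exact_mod_cast hc, rfl⟩
    · exfalso
      apply hsirr (-(c / d))
      have : (d : K) ≠ 0 := by exact_mod_cast hd
      field_simp
      have hc : (c : K) + (d : K) * s = 0 := by
        simpa [Rat.smul_def] using hcd
      rw [Rat.cast_neg, Rat.cast_div, neg_eq_iff_eq_neg, div_eq_iff this]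
      linear_combination hc
  have hcard : Fintype.card (Fin 2) = finrank ℚ K := by simp [hK]
  let b := basisOfLinearIndependentOfCardEqFinrank li hcard
  have hb0 : b 0 = 1 := by
    simp [b, coe_basisOfLinearIndependentOfCardEqFinrank]
  have hb1 : b 1 = s := by
    simp [b, coe_basisOfLinearIndependentOfCardEqFinrank]
  set x : K := (a : K) + s with hx
  have hx0 : x * b 0 = a • b 0 + (1 : ℚ) • b 1 := by
    rw [hb0, hb1]; simp [hx, Rat.smul_def]
  have hx1 : x * b 1 = nq • b 0 + a • b 1 := by
    rw [hb0, hb1]; simp only [hx, Rat.smul_def, mul_one]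
    ring_nf
    linear_combination hs
  rw [Algebra.norm_eq_matrix_det b x, Matrix.det_fin_two]
  simp only [Algebra.leftMulMatrix_eq_repr_mul, hx0, hx1, map_add, map_smul, Basis.repr_self,
    Finsupp.smul_single, smul_eq_mul, mul_one, Finsupp.add_apply, Finsupp.single_apply]
  norm_num
  ring

/-- A Diophantine `m`-tuple with the property `D(n)` which contains `1`
is a norm tuple: each of its elements is the norm of a nonzero integral ideal of `ℚ(√n)`. -/
theorem diophantine_tuple_containing_one_is_norm_tuple
    (n : ℤ) (hn : n ≠ 0) (hnsq : ¬ IsSquare n)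
    (K : Type*) [Field K] [NumberField K] (hK : finrank ℚ K = 2)
    (s : K) (hs : s ^ 2 = (n : K))
    (m : ℕ) (t : Fin m → ℕ) (hinj : Function.Injective t) (hpos : ∀ i, 0 < t i)
    (hD : ∀ i j, i ≠ j → ∃ r : ℤ, (t i : ℤ) * t j + n = r ^ 2)
    (hone : ∃ i, t i = 1) :
    ∀ i, ∃ 𝔞 : Ideal (𝓞 K), 𝔞 ≠ ⊥ ∧ Ideal.absNorm 𝔞 = t i := by
  -- s is not rational
  have hsirr : ∀ q : ℚ, (q : K) ≠ s := by
    intro q hq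
    have hq2 : (q ^ 2 : ℚ) = (n : ℚ) := by
      have : ((q : K)) ^ 2 = ((n : ℚ) : K) := by rw [hq, hs]; push_cast; ring
      exact_mod_cast this
    have hden : q.den = 1 := by
      have h1 : (q ^ 2).den = 1 := by rw [hq2]; exact Rat.den_intCast n
      have h2 : (q ^ 2).den = q.den ^ 2 := by
        rw [sq, sq]; exact Rat.mul_self_den q
      nlinarith [q.pos]
    have : n = q.num ^ 2 := by
      have := Rat.den_eq_one_iff q |>.mp hden
      rw [← this] at hq2
      exact_mod_cast hq2.symm
    exact hnsq ⟨q.num, by rw [this]; ring⟩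
  have hsint : IsIntegral ℤ s := by
    refine ⟨Polynomial.X ^ 2 - Polynomial.C n, Polynomial.monic_X_pow_sub_C n (by norm_num), ?_⟩
    simp only [Polynomial.eval₂_sub, Polynomial.eval₂_pow, Polynomial.eval₂_X, Polynomial.eval₂_C, hs]
    simp
  intro i
  obtain ⟨i₀, hi₀⟩ := hone
  by_cases hti : t i = 1
  · exact ⟨⊤, top_ne_bot, by rw [hti]; exact Ideal.absNorm_top⟩
  · have hne : i ≠ i₀ := fun h => hti (h ▸ hi₀)
    obtain ⟨r, hr⟩ := hD i i₀ hne
    rw [hi₀] at hr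
    have hti' : (t i : ℤ) = r ^ 2 - n := by push_cast at hr ⊢; linarith
    -- the element r + s
    have hxint : IsIntegral ℤ ((r : K) + s) :=
      (IsIntegral.add (by simpa using isIntegral_algebraMap (R := ℤ) (A := K) (x := r)) hsint)
    set x : 𝓞 K := ⟨(r : K) + s, hxint⟩ with hxdef
    have hxne : x ≠ 0 := by
      intro h
      apply hsirr (-(r : ℚ))
      have : (r : K) + s = 0 := congrArg (fun y : 𝓞 K => (y : K)) h
      push_cast
      linear_combination (-1 : K) * this
    refine ⟨Ideal.span {x}, ?_, ?_⟩
    · rw [Ne, Ideal.span_singleton_eq_bot]; exact hxne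
    · rw [Ideal.absNorm_span_singleton]
      have hnorm : Algebra.norm ℚ ((x : K)) = ((r : ℚ) ^ 2 - (n : ℚ)) := by
        have := quad_norm_formula K hK s hsirr (n : ℚ) (r : ℚ)
          (by rw [hs]; push_cast; ring)
        show Algebra.norm ℚ ((r : K) + s) = _
        simpa using this
      have hZ : Algebra.norm ℤ x = (t i : ℤ) := by
        have h1 : ((Algebra.norm ℤ x : ℤ) : ℚ) = ((t i : ℤ) : ℚ) := by
          rw [Algebra.coe_norm_int, hnorm, hti']; push_cast; ring
        exact_mod_cast h1
      rw [hZ, Int.natAbs_natCast]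
end

section
/- Let n be a squarefree integer with n ≠ 1, and let a₁, a₂ be coprime positive integers such that a₁a₂ + n = x² for some integer x. For i = 1, 2, let 𝔞ᵢ be the integral ideal of the ring of integers of ℚ(√n) generated by aᵢ and x + √n. Then 𝒩(𝔞ᵢ) = aᵢ for i = 1, 2, and the product 𝔞₁𝔞₂ is a principal ideal. -/
open NumberField Module

lemma no_rat_sqrt (n : ℤ) (hsf : Squarefree n) (hn : n ≠ 1) (q : ℚ) : q ^ 2 ≠ (n : ℚ) := by
  intro h
  have hq : IsIntegral ℤ q := by
    refine ⟨Polynomial.X ^ 2 - Polynomial.C n, Polynomial.monic_X_pow_sub_C n (by norm_num), ?_⟩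
    simp only [Polynomial.eval₂_sub, Polynomial.eval₂_pow, Polynomial.eval₂_X,
      Polynomial.eval₂_C, h]
    simp [eq_intCast]
  obtain ⟨m, rfl⟩ := IsIntegrallyClosed.isIntegral_iff.mp hq
  have h' : ((m : ℚ)) ^ 2 = (n : ℚ) := by simpa [eq_intCast] using h
  have hm : m ^ 2 = n := by exact_mod_cast h'
  have hu : IsUnit m := hsf m ⟨1, by rw [← hm]; ring⟩
  rcases Int.isUnit_iff.mp hu with rfl | rfl
  · exact hn (by simpa using hm.symm)
  · exact hn (by simpa using hm.symm)

lemma norm_helper (K : Type*) [Field K] [NumberField K] (hK : finrank ℚ K = 2)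
    (n : ℤ) (hn : ∀ q : ℚ, q ^ 2 ≠ (n : ℚ)) (s : K) (hs : s ^ 2 = (n : K)) (x : ℤ) :
    Algebra.norm ℚ ((x : K) + s) = ((x : ℚ) ^ 2 - n) := by
  have li : LinearIndependent ℚ ![1, s] := by
    rw [LinearIndependent.pair_iff]
    intro a b hab
    rcases eq_or_ne b 0 with rfl | hb
    · simp only [smul_eq_mul, zero_smul, add_zero, smul_eq_zero, one_ne_zero, or_false] at hab
      exact ⟨by simpa using hab, rfl⟩
    · exfalso
      apply hn (-a / b)
      have hA : Function.Injective (algebraMap ℚ K) := (algebraMap ℚ K).injective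
      have hb' : algebraMap ℚ K b ≠ 0 := by simpa using hb
      rw [Algebra.smul_def, Algebra.smul_def, mul_one] at hab
      have hs' : s = algebraMap ℚ K (-a / b) := by
        rw [map_div₀, map_neg, eq_div_iff hb']
        linear_combination hab
      apply hA
      rw [map_pow, ← hs', hs]
      simp
  have hcard : Fintype.card (Fin 2) = finrank ℚ K := by simp [hK]
  let B := basisOfLinearIndependentOfCardEqFinrank li hcard
  have hB : ⇑B = ![1, s] := coe_basisOfLinearIndependentOfCardEqFinrank li hcard
  have hB0 : B 0 = 1 := by simp [hB]
  have hB1 : B 1 = s := by simp [hB]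
  have e0 : ((x : K) + s) * B 0 = (x : ℚ) • B 0 + (1 : ℚ) • B 1 := by
    simp only [hB0, hB1, Algebra.smul_def, mul_one, one_smul, map_intCast, map_one]
    ring
  have e1 : ((x : K) + s) * B 1 = (n : ℚ) • B 0 + (x : ℚ) • B 1 := by
    simp only [hB0, hB1, Algebra.smul_def, mul_one, map_intCast, map_one]
    linear_combination hs
  rw [Algebra.norm_eq_matrix_det B, Matrix.det_fin_two]
  simp only [Algebra.leftMulMatrix_eq_repr_mul]
  rw [e0, e1]
  simp [Finsupp.single_apply]
  ring

/-- Let `n` be a squarefree integer, `n ≠ 1`, and let `a₁, a₂` be coprime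
positive integers with `a₁a₂ + n = x²` for some integer `x`.  Then the ideals
`𝔞ᵢ = ⟨aᵢ, x + √n⟩` of the ring of integers of `ℚ(√n)` satisfy `𝒩(𝔞ᵢ) = aᵢ`, and the
product `𝔞₁𝔞₂` is principal. -/
theorem norm_of_explicit_ideals_of_diophantine_pair
    (n : ℤ) (hsf : Squarefree n) (hn : n ≠ 1)
    (K : Type*) [Field K] [NumberField K] (hK : finrank ℚ K = 2)
    (σ : 𝓞 K) (hσ : σ ^ 2 = (n : 𝓞 K))
    (a₁ a₂ : ℕ) (ha₁ : 0 < a₁) (ha₂ : 0 < a₂) (hcop : Nat.Coprime a₁ a₂)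
    (x : ℤ) (hx : (a₁ : ℤ) * a₂ + n = x ^ 2) :
    Ideal.absNorm (Ideal.span {(a₁ : 𝓞 K), (x : 𝓞 K) + σ}) = a₁ ∧
    Ideal.absNorm (Ideal.span {(a₂ : 𝓞 K), (x : 𝓞 K) + σ}) = a₂ ∧
    (Ideal.span {(a₁ : 𝓞 K), (x : 𝓞 K) + σ} *
      Ideal.span {(a₂ : 𝓞 K), (x : 𝓞 K) + σ}).IsPrincipal := by
  set β : 𝓞 K := (x : 𝓞 K) + σ with hβ
  have hxn : (x : ℤ) ^ 2 - n = (a₁ : ℤ) * a₂ := by linarith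
  have hxnK : ((x : 𝓞 K)) ^ 2 - (n : 𝓞 K) = (a₁ : 𝓞 K) * (a₂ : 𝓞 K) := by
    have := congrArg (fun z : ℤ => (z : 𝓞 K)) hxn
    push_cast at this
    exact this
  have key : β * ((x : 𝓞 K) - σ) = (a₁ : 𝓞 K) * (a₂ : 𝓞 K) := by
    rw [hβ]
    linear_combination hxnK - hσ
  set A₁ := Ideal.span {(a₁ : 𝓞 K), β} with hA₁
  set A₂ := Ideal.span {(a₂ : 𝓞 K), β} with hA₂
  -- the product is the principal ideal generated by β
  have hprod : A₁ * A₂ = Ideal.span {β} := by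
    apply le_antisymm
    · rw [hA₁, hA₂, Ideal.span_mul_span']
      rw [Ideal.span_le]
      rintro z ⟨p, hp, q, hq, rfl⟩
      rw [SetLike.mem_coe, Ideal.mem_span_singleton]
      rcases Set.mem_insert_iff.mp hp with rfl | hp <;>
        rcases Set.mem_insert_iff.mp hq with rfl | hq
      · exact ⟨(x : 𝓞 K) - σ, key.symm⟩
      · rw [Set.mem_singleton_iff.mp hq]; exact ⟨(a₁ : 𝓞 K), mul_comm _ _⟩
      · rw [Set.mem_singleton_iff.mp hp]; exact Dvd.intro _ rfl
      · rw [Set.mem_singleton_iff.mp hp]; exact Dvd.intro _ rfl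
    · rw [Ideal.span_singleton_le_iff_mem]
      have hcop' : IsCoprime (a₁ : ℤ) (a₂ : ℤ) := by
        rw [Int.isCoprime_iff_gcd_eq_one]
        simpa [Int.gcd] using hcop
      obtain ⟨u, v, huv⟩ := hcop'
      have huvK : (u : 𝓞 K) * (a₁ : 𝓞 K) + (v : 𝓞 K) * (a₂ : 𝓞 K) = 1 := by
        have := congrArg (fun z : ℤ => (z : 𝓞 K)) huv
        push_cast at this
        exact this
      have hβeq : β = (u : 𝓞 K) * ((a₁ : 𝓞 K) * β) + (v : 𝓞 K) * (β * (a₂ : 𝓞 K)) := by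
        linear_combination (-β) * huvK
      rw [hβeq]
      refine add_mem (Ideal.mul_mem_left _ _ (Ideal.mul_mem_mul ?_ ?_))
        (Ideal.mul_mem_left _ _ (Ideal.mul_mem_mul ?_ ?_)) <;>
        exact Ideal.subset_span (by simp)
  -- norm of span {β}
  have hs2 : ((σ : K)) ^ 2 = (n : K) := by
    have := congrArg (fun z : 𝓞 K => (z : K)) hσ
    push_cast at this
    exact this
  have hNβ : Ideal.absNorm (Ideal.span {β}) = a₁ * a₂ := by
    rw [Ideal.absNorm_span_singleton]
    have h1 : ((Algebra.norm ℤ β : ℤ) : ℚ) = ((x : ℚ) ^ 2 - n) := by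
      rw [Algebra.coe_norm_int]
      have hβK : ((β : K)) = (x : K) + (σ : K) := by
        rw [hβ, RingOfIntegers.coe_eq_algebraMap, map_add, map_intCast,
          ← RingOfIntegers.coe_eq_algebraMap]
      rw [hβK]
      exact norm_helper K hK n (no_rat_sqrt n hsf hn) _ hs2 x
    have h2 : Algebra.norm ℤ β = (a₁ : ℤ) * a₂ := by
      have h2' : ((x : ℚ) ^ 2 - n) = (((a₁ : ℤ) * a₂ : ℤ) : ℚ) := by
        push_cast
        exact_mod_cast congrArg (fun z : ℤ => (z : ℚ)) hxn
      exact_mod_cast h1.trans h2'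
    rw [h2]
    simp [Int.natAbs_mul]
  -- divisibility facts
  have hdvd : ∀ (a : ℕ), Ideal.absNorm (Ideal.span {(a : 𝓞 K), β}) ∣ a ^ 2 := by
    intro a
    have hle : Ideal.span {(a : 𝓞 K)} ≤ Ideal.span {(a : 𝓞 K), β} :=
      Ideal.span_mono (by simp)
    have hd := Ideal.absNorm_dvd_absNorm_of_le hle
    rw [Ideal.absNorm_span_singleton] at hd
    have hnorm_a : Algebra.norm ℤ ((a : 𝓞 K)) = (a : ℤ) ^ 2 := by
      rw [show ((a : 𝓞 K)) = algebraMap ℤ (𝓞 K) (a : ℤ) by simp,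
        Algebra.norm_algebraMap_of_basis (RingOfIntegers.basis K),
        show Fintype.card (Module.Free.ChooseBasisIndex ℤ (𝓞 K)) = 2 by
          rw [← Module.finrank_eq_card_basis (RingOfIntegers.basis K), RingOfIntegers.rank, hK]]
    rw [hnorm_a] at hd
    simpa [Int.natAbs_pow] using hd
  have hmulN : Ideal.absNorm A₁ * Ideal.absNorm A₂ = a₁ * a₂ := by
    have := _root_.map_mul (Ideal.absNorm (S := 𝓞 K)) A₁ A₂
    rw [hprod, hNβ] at this
    exact this.symm
  have hd1 : Ideal.absNorm A₁ ∣ a₁ := by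
    have h := Nat.dvd_gcd (hdvd a₁) ⟨Ideal.absNorm A₂, hmulN.symm⟩
    rwa [pow_two, Nat.gcd_mul_left, hcop, mul_one] at h
  have hd2 : Ideal.absNorm A₂ ∣ a₂ := by
    have hx2 : Ideal.absNorm A₂ ∣ a₂ * a₁ :=
      ⟨Ideal.absNorm A₁, by rw [mul_comm a₂ a₁, ← hmulN, mul_comm]⟩
    have h := Nat.dvd_gcd (hdvd a₂) hx2
    rwa [pow_two, Nat.gcd_mul_left, Nat.coprime_comm.mp hcop, mul_one] at h
  have h1 : Ideal.absNorm A₁ = a₁ := by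
    refine Nat.dvd_antisymm hd1 ?_
    have h := mul_dvd_mul_left (Ideal.absNorm A₁) hd2
    rw [hmulN] at h
    exact (Nat.mul_dvd_mul_iff_right ha₂).mp h
  have h2 : Ideal.absNorm A₂ = a₂ := by
    refine Nat.dvd_antisymm hd2 ?_
    have h := mul_dvd_mul_left (Ideal.absNorm A₂) hd1
    rw [mul_comm (Ideal.absNorm A₂) (Ideal.absNorm A₁), hmulN, mul_comm a₁ a₂] at h
    exact (Nat.mul_dvd_mul_iff_right ha₁).mp h
  exact ⟨h1, h2, ⟨⟨β, hprod⟩⟩⟩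
end

section
/- Let n be a squarefree integer with n ≠ 1, and let a₁, a₂ be coprime positive integers such that a₁a₂ + n = x² for some integer x. Then in the ring of integers of ℚ(√n), the product of ideals ⟨a₁, x + √n⟩ · ⟨a₂, x + √n⟩ equals the principal ideal ⟨x + √n⟩. -/
open NumberField Module

/-- Let `n` be a squarefree integer, `n ≠ 1`, and let `a₁, a₂` be coprime
positive integers with `a₁a₂ + n = x²` for some integer `x`.  Then in the ring of integers
of `ℚ(√n)` one has `⟨a₁, x + √n⟩ · ⟨a₂, x + √n⟩ = ⟨x + √n⟩`. -/
theorem prod_of_explicit_ideals_eq_principal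
    (n : ℤ) (hsf : Squarefree n) (hn : n ≠ 1)
    (K : Type*) [Field K] [NumberField K] (hK : finrank ℚ K = 2)
    (σ : 𝓞 K) (hσ : σ ^ 2 = (n : 𝓞 K))
    (a₁ a₂ : ℕ) (ha₁ : 0 < a₁) (ha₂ : 0 < a₂) (hcop : Nat.Coprime a₁ a₂)
    (x : ℤ) (hx : (a₁ : ℤ) * a₂ + n = x ^ 2) :
    Ideal.span {(a₁ : 𝓞 K), (x : 𝓞 K) + σ} * Ideal.span {(a₂ : 𝓞 K), (x : 𝓞 K) + σ} =
      Ideal.span {(x : 𝓞 K) + σ} := by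
  set t : 𝓞 K := (x : 𝓞 K) + σ with ht
  have key : (a₁ : 𝓞 K) * (a₂ : 𝓞 K) = ((x : 𝓞 K) - σ) * t := by
    have h0 := congrArg (fun z : ℤ => (z : 𝓞 K)) hx
    push_cast at h0
    rw [ht]
    linear_combination h0 + hσ
  apply le_antisymm
  · rw [Ideal.mul_le]
    intro r hr s hs
    rw [Ideal.mem_span_pair] at hr hs
    obtain ⟨c, d, rfl⟩ := hr
    obtain ⟨e, f, rfl⟩ := hs
    rw [Ideal.mem_span_singleton]
    refine ⟨c * e * ((x : 𝓞 K) - σ) + c * f * (a₁ : 𝓞 K) + d * e * (a₂ : 𝓞 K) + d * f * t, ?_⟩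
    have : (c * (a₁ : 𝓞 K) + d * t) * (e * (a₂ : 𝓞 K) + f * t)
        = c * e * ((a₁ : 𝓞 K) * (a₂ : 𝓞 K)) + t * (c * f * (a₁ : 𝓞 K) + d * e * (a₂ : 𝓞 K) + d * f * t) := by
      ring
    rw [this, key]; ring
  · rw [Ideal.span_singleton_le_iff_mem]
    have hcop' : IsCoprime (a₁ : ℤ) (a₂ : ℤ) := Int.isCoprime_iff_gcd_eq_one.mpr hcop
    obtain ⟨u, v, huv⟩ := hcop'
    have h1 : (a₁ : 𝓞 K) * t ∈ Ideal.span {(a₁ : 𝓞 K), t} * Ideal.span {(a₂ : 𝓞 K), t} :=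
      Ideal.mul_mem_mul (Ideal.subset_span (by simp)) (Ideal.subset_span (by simp))
    have h2 : t * (a₂ : 𝓞 K) ∈ Ideal.span {(a₁ : 𝓞 K), t} * Ideal.span {(a₂ : 𝓞 K), t} :=
      Ideal.mul_mem_mul (Ideal.subset_span (by simp)) (Ideal.subset_span (by simp))
    have heq : t = (u : 𝓞 K) * ((a₁ : 𝓞 K) * t) + (v : 𝓞 K) * (t * (a₂ : 𝓞 K)) := by
      have : (u : 𝓞 K) * (a₁ : 𝓞 K) + (v : 𝓞 K) * (a₂ : 𝓞 K) = 1 := by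
        have h0 := congrArg (fun z : ℤ => (z : 𝓞 K)) huv
        push_cast at h0
        exact h0
      calc t = ((u : 𝓞 K) * (a₁ : 𝓞 K) + (v : 𝓞 K) * (a₂ : 𝓞 K)) * t := by rw [this]; ring
        _ = (u : 𝓞 K) * ((a₁ : 𝓞 K) * t) + (v : 𝓞 K) * (t * (a₂ : 𝓞 K)) := by ring
    have hm := Ideal.add_mem _ (Ideal.mul_mem_left _ ((u : 𝓞 K)) h1) (Ideal.mul_mem_left _ ((v : 𝓞 K)) h2)
    rwa [← heq] at hm
end

section
/- Let n be a squarefree integer with n ≠ 1, and let a₁, a₂ be coprime positive integers such that a₁a₂ + n = x² for some integer x. Then for i = 1, 2, the norm of the integral ideal ⟨aᵢ, x + √n⟩ of the ring of integers of ℚ(√n) divides aᵢ. -/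
open NumberField Module
open Polynomial IntermediateField

lemma norm_of_quadratic {K : Type*} [Field K] [NumberField K] (hK : finrank ℚ K = 2)
    (α : K) (c b : ℚ) (hroot : α ^ 2 + algebraMap ℚ K c * α + algebraMap ℚ K b = 0)
    (hirr : α ∉ (algebraMap ℚ K).range) :
    Algebra.norm ℚ α = b := by
  have hint : IsIntegral ℚ α := Algebra.IsIntegral.isIntegral α
  set q : ℚ[X] := X ^ 2 + C c * X + C b with hq
  have hqmonic : q.Monic := by
    unfold q
    monicity!
  have haev : Polynomial.aeval α q = 0 := by
    simp only [hq, map_add, map_mul, aeval_X_pow, aeval_C, aeval_X]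
    exact hroot
  have hdvd : minpoly ℚ α ∣ q := minpoly.dvd ℚ α haev
  have hqnd : q.natDegree = 2 := by
    unfold q
    compute_degree!
  have hmnd : (minpoly ℚ α).natDegree = 2 := by
    have h1 : (minpoly ℚ α).natDegree ≤ 2 := hqnd ▸ Polynomial.natDegree_le_of_dvd hdvd hqmonic.ne_zero
    have h0 : 0 < (minpoly ℚ α).natDegree := minpoly.natDegree_pos hint
    interval_cases h : (minpoly ℚ α).natDegree
    · exact absurd (minpoly.degree_eq_one_iff.mp (by
        rw [Polynomial.degree_eq_natDegree (minpoly.ne_zero hint), h]; rfl)) hirr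
    · rfl
  have hmq : minpoly ℚ α = q := by
    obtain ⟨s, hs⟩ := hdvd
    have hmmon : (minpoly ℚ α).Monic := minpoly.monic hint
    have hsmon : s.Monic := hmmon.of_mul_monic_left (hs ▸ hqmonic)
    have hnd : s.natDegree = 0 := by
      have := Polynomial.natDegree_mul hmmon.ne_zero hsmon.ne_zero
      rw [← hs, hqnd, hmnd] at this
      omega
    rw [hs, eq_one_of_monic_natDegree_zero hsmon hnd, mul_one]
  have hsep : Algebra.IsSeparable ℚ K := inferInstance
  rw [Algebra.norm_eq_norm_adjoin ℚ α]
  have hfr : finrank ℚ ℚ⟮α⟯ = 2 := by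
    rw [IntermediateField.adjoin.finrank hint, hmnd]
  have hfr1 : finrank (↥ℚ⟮α⟯) K = 1 := by
    have := finrank_mul_finrank ℚ (↥ℚ⟮α⟯) K
    rw [hfr, hK] at this
    omega
  rw [hfr1, pow_one, ← IntermediateField.adjoin.powerBasis_gen hint,
    Algebra.PowerBasis.norm_gen_eq_coeff_zero_minpoly,
    IntermediateField.adjoin.powerBasis_gen hint, IntermediateField.minpoly_gen, hmq]
  have hdim : (IntermediateField.adjoin.powerBasis hint).dim = 2 := by
    simp [IntermediateField.adjoin.powerBasis, hmnd]
  rw [hdim]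
  simp [hq, Polynomial.coeff_add, Polynomial.coeff_X_pow]

lemma key_norm_elt {K : Type*} [Field K] [NumberField K] (hK : finrank ℚ K = 2)
    (n : ℤ) (hsf : Squarefree n) (hn : n ≠ 1)
    (σ : 𝓞 K) (hσ : σ ^ 2 = (n : 𝓞 K)) (x : ℤ) :
    Algebra.norm ℤ ((x : 𝓞 K) + σ) = x ^ 2 - n := by
  have hσK : (σ : K) ^ 2 = (n : K) := by
    have := congrArg (algebraMap (𝓞 K) K) hσ
    simpa using this
  have hirr : ((x : K) + (σ : K)) ∉ (algebraMap ℚ K).range := by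
    rintro ⟨r, hr⟩
    have hσr : (σ : K) = algebraMap ℚ K (r - x) := by
      rw [map_sub, hr, map_intCast]
      ring
    have hint : IsIntegral ℤ (r - (x : ℚ)) := by
      have h1 : IsIntegral ℤ (σ : K) := σ.2
      rw [hσr] at h1
      exact (isIntegral_algebraMap_iff (algebraMap ℚ K).injective).mp h1
    obtain ⟨m, hm⟩ := IsIntegrallyClosed.isIntegral_iff.mp hint
    have hmK : (σ : K) = (m : K) := by
      rw [hσr, ← hm, ← IsScalarTower.algebraMap_apply, algebraMap_int_eq, eq_intCast]
    have hm2 : (m : ℤ) ^ 2 = n := by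
      have : ((m ^ 2 : ℤ) : K) = ((n : ℤ) : K) := by
        push_cast
        rw [← hmK]
        exact hσK
      exact_mod_cast this
    have hu : IsUnit m := hsf m (by rw [← hm2]; ring_nf; exact dvd_refl _)
    rcases Int.isUnit_iff.mp hu with h | h <;> rw [h] at hm2 <;> simp at hm2 <;> omega
  have hnormQ : Algebra.norm ℚ ((x : K) + (σ : K)) = (x : ℚ) ^ 2 - n := by
    apply norm_of_quadratic hK _ (-2 * x) ((x : ℚ) ^ 2 - n) _ hirr
    simp only [map_sub, map_mul, map_neg, map_pow, map_ofNat, map_intCast]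
    linear_combination hσK
  have h0 := Algebra.coe_norm_int ((x : 𝓞 K) + σ)
  have hcoe : (((x : 𝓞 K) + σ : 𝓞 K) : K) = (x : K) + (σ : K) := by
    push_cast
    simp
  rw [hcoe, hnormQ] at h0
  exact_mod_cast h0

lemma key_div {K : Type*} [Field K] [NumberField K] (hK : finrank ℚ K = 2)
    (n : ℤ) (hsf : Squarefree n) (hn : n ≠ 1)
    (σ : 𝓞 K) (hσ : σ ^ 2 = (n : 𝓞 K))
    (a b : ℕ) (hcop : Nat.Coprime a b)
    (x : ℤ) (hx : (a : ℤ) * b + n = x ^ 2) :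
    Ideal.absNorm (Ideal.span {(a : 𝓞 K), (x : 𝓞 K) + σ}) ∣ a := by
  set I := Ideal.span {(a : 𝓞 K), (x : 𝓞 K) + σ} with hI
  have d1 : Ideal.absNorm I ∣ a ^ 2 := by
    have hle : Ideal.span {(a : 𝓞 K)} ≤ I := Ideal.span_mono (by simp)
    have h := Ideal.absNorm_dvd_absNorm_of_le hle
    rw [Ideal.absNorm_span_singleton, show Algebra.norm ℤ ((a : ℕ) : 𝓞 K) = (a : ℤ) ^ 2 by
      have h1 := Algebra.coe_norm_int ((a : ℕ) : 𝓞 K)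
      have h2 : (((a : ℕ) : 𝓞 K) : K) = algebraMap ℚ K (a : ℚ) := by push_cast; simp
      rw [h2, Algebra.norm_algebraMap, hK] at h1
      exact_mod_cast h1, Int.natAbs_pow] at h
    simpa using h
  have d2 : Ideal.absNorm I ∣ a * b := by
    have hle : Ideal.span {(x : 𝓞 K) + σ} ≤ I := Ideal.span_mono (by simp)
    have h := Ideal.absNorm_dvd_absNorm_of_le hle
    rw [Ideal.absNorm_span_singleton, key_norm_elt hK n hsf hn σ hσ x,
      show x ^ 2 - n = (a : ℤ) * b by omega] at h
    exact_mod_cast h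
  have h := Nat.dvd_gcd d1 d2
  rwa [pow_two, Nat.gcd_mul_left, hcop, mul_one] at h

/-- Let `n` be a squarefree integer, `n ≠ 1`, and let `a₁, a₂` be coprime
positive integers with `a₁a₂ + n = x²` for some integer `x`.  Then for `i = 1, 2` the norm
of the ideal `⟨aᵢ, x + √n⟩` of the ring of integers of `ℚ(√n)` divides `aᵢ`. -/
theorem norm_of_explicit_ideal_divides
    (n : ℤ) (hsf : Squarefree n) (hn : n ≠ 1)
    (K : Type*) [Field K] [NumberField K] (hK : finrank ℚ K = 2)
    (σ : 𝓞 K) (hσ : σ ^ 2 = (n : 𝓞 K))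
    (a₁ a₂ : ℕ) (ha₁ : 0 < a₁) (ha₂ : 0 < a₂) (hcop : Nat.Coprime a₁ a₂)
    (x : ℤ) (hx : (a₁ : ℤ) * a₂ + n = x ^ 2) :
    Ideal.absNorm (Ideal.span {(a₁ : 𝓞 K), (x : 𝓞 K) + σ}) ∣ a₁ ∧
    Ideal.absNorm (Ideal.span {(a₂ : 𝓞 K), (x : 𝓞 K) + σ}) ∣ a₂ := by
  exact ⟨key_div hK n hsf hn σ hσ a₁ a₂ hcop x hx,
    key_div hK n hsf hn σ hσ a₂ a₁ hcop.symm x (by linarith)⟩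
end
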